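/- Let s ≥ 1 and B(x₁,...,x_s) = a_c + Σ_{m=0}^{L} a_m ∏_{i=1}^{s} T_{p_i^m}(x_i), where p_1,...,p_s ≥ 2. With respect to the product measure ∏_i dx_i/(π√(1−x_i²)) on [−1,1]^s, ⟨B⟩ = a_c and for l ≥ 1 the correlation with the map (x₁,...,x_s) ↦ (T_{p_1}(x_1),...,T_{p_s}(x_s)) iterated l times satisfies ⟨B·B_l⟩ = a_c² + (1/2^s) Σ_{m=l}^{L} a_m a_{m−l}. -/

import Mathlib

open Polynomial Polynomial.Chebyshev MeasureTheory Finset Real Set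

noncomputable def chebMeas : Measure ℝ :=
  (volume.restrict (Set.Icc (-1 : ℝ) 1)).withDensity
    (fun x => ENNReal.ofReal (1 / (Real.pi * Real.sqrt (1 - x ^ 2))))

lemma cos_image_Ioo : Real.cos '' Set.Ioo 0 π = Set.Ioo (-1 : ℝ) 1 := by
  ext y
  constructor
  · rintro ⟨θ, hθ, rfl⟩
    constructor
    · have := Real.strictAntiOn_cos ⟨le_of_lt hθ.1, hθ.2.le⟩ (Set.right_mem_Icc.2 Real.pi_pos.le) hθ.2
      simpa [Real.cos_pi] using this
    · have := Real.strictAntiOn_cos (Set.left_mem_Icc.2 Real.pi_pos.le) ⟨hθ.1.le, hθ.2.le⟩ hθ.1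
      simpa [Real.cos_zero] using this
  · rintro ⟨h1, h2⟩
    refine ⟨Real.arccos y, ⟨Real.arccos_pos.2 h2, ?_⟩, Real.cos_arccos h1.le h2.le⟩
    refine lt_of_le_of_ne (Real.arccos_le_pi y) fun h => ?_
    have := Real.cos_arccos h1.le h2.le
    rw [h, Real.cos_pi] at this
    exact absurd this.symm (ne_of_gt h1)

lemma injOn_cos_Ioo : Set.InjOn Real.cos (Set.Ioo 0 π) :=
  Real.strictAntiOn_cos.injOn.mono Set.Ioo_subset_Icc_self

lemma cheb_density_eq (θ : ℝ) (hθ : θ ∈ Set.Ioo 0 π) (h : ℝ → ℝ) :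
    |(-Real.sin θ)| • ((Real.toNNReal (1 / (Real.pi * Real.sqrt (1 - Real.cos θ ^ 2)))) • h (Real.cos θ))
      = π⁻¹ • h (Real.cos θ) := by
  have hsin : 0 < Real.sin θ := Real.sin_pos_of_pos_of_lt_pi hθ.1 hθ.2
  have hsq : Real.sqrt (1 - Real.cos θ ^ 2) = Real.sin θ := by
    rw [show (1 : ℝ) - Real.cos θ ^ 2 = Real.sin θ ^ 2 by
      have := Real.sin_sq_add_cos_sq θ; linarith]
    exact Real.sqrt_sq hsin.le
  have hπ : (0:ℝ) < π := Real.pi_pos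
  rw [hsq, abs_neg, abs_of_pos hsin, NNReal.smul_def,
    Real.coe_toNNReal _ (by positivity), smul_eq_mul, smul_eq_mul, smul_eq_mul]
  field_simp

lemma cheb_integral (h : ℝ → ℝ) :
    ∫ x, h x ∂chebMeas = π⁻¹ * ∫ θ in Set.Ioo 0 π, h (Real.cos θ) := by
  have hw : Measurable fun x : ℝ => Real.toNNReal (1 / (Real.pi * Real.sqrt (1 - x ^ 2))) := by
    fun_prop
  have hcd : ∀ x ∈ Set.Ioo 0 π, HasDerivWithinAt Real.cos (-Real.sin x) (Set.Ioo 0 π) x :=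
    fun x _ => (Real.hasDerivAt_cos x).hasDerivWithinAt
  calc ∫ x, h x ∂chebMeas
      = ∫ x in Set.Icc (-1:ℝ) 1,
          (Real.toNNReal (1 / (Real.pi * Real.sqrt (1 - x ^ 2)))) • h x := by
        rw [chebMeas, ← integral_withDensity_eq_integral_smul hw]
        rfl
    _ = ∫ x in Set.Ioo (-1:ℝ) 1,
          (Real.toNNReal (1 / (Real.pi * Real.sqrt (1 - x ^ 2)))) • h x :=
        integral_Icc_eq_integral_Ioo
    _ = ∫ θ in Set.Ioo 0 π, |(-Real.sin θ)| •
          ((Real.toNNReal (1 / (Real.pi * Real.sqrt (1 - Real.cos θ ^ 2)))) • h (Real.cos θ)) := by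
        rw [← cos_image_Ioo]
        exact integral_image_eq_integral_abs_deriv_smul measurableSet_Ioo hcd injOn_cos_Ioo _
    _ = ∫ θ in Set.Ioo 0 π, π⁻¹ • h (Real.cos θ) :=
        setIntegral_congr_fun measurableSet_Ioo (fun θ hθ => cheb_density_eq θ hθ h)
    _ = π⁻¹ * ∫ θ in Set.Ioo 0 π, h (Real.cos θ) := by
        rw [integral_smul]; rfl

lemma cheb_integrable (h : ℝ → ℝ) (hc : Continuous h) : Integrable h chebMeas := by
  have hw : Measurable fun x : ℝ => Real.toNNReal (1 / (Real.pi * Real.sqrt (1 - x ^ 2))) := by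
    fun_prop
  have hcd : ∀ x ∈ Set.Ioo 0 π, HasDerivWithinAt Real.cos (-Real.sin x) (Set.Ioo 0 π) x :=
    fun x _ => (Real.hasDerivAt_cos x).hasDerivWithinAt
  rw [chebMeas]
  have : IntegrableOn
      (fun x => (Real.toNNReal (1 / (Real.pi * Real.sqrt (1 - x ^ 2)))) • h x)
      (Set.Ioo (-1:ℝ) 1) volume := by
    rw [← cos_image_Ioo,
      integrableOn_image_iff_integrableOn_abs_deriv_smul measurableSet_Ioo hcd injOn_cos_Ioo]
    have hcont : IntegrableOn (fun θ : ℝ => π⁻¹ • h (Real.cos θ)) (Set.Ioo 0 π) volume := by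
      apply (Continuous.integrableOn_Icc (X := ℝ) (a := 0) (b := π)
        (by fun_prop)).mono_set Set.Ioo_subset_Icc_self
    exact hcont.congr_fun (fun θ hθ => (cheb_density_eq θ hθ h).symm) measurableSet_Ioo
  have this2 : IntegrableOn
      (fun x => h x * (ENNReal.ofReal (1 / (Real.pi * Real.sqrt (1 - x ^ 2)))).toReal)
      (Set.Ioo (-1:ℝ) 1) volume := by
    refine this.congr_fun (fun x _ => ?_) measurableSet_Ioo
    simp [ENNReal.toReal_ofReal', Real.coe_toNNReal', NNReal.smul_def, mul_comm]
  have hw2 : Measurable (fun x : ℝ => ENNReal.ofReal (1 / (Real.pi * Real.sqrt (1 - x ^ 2)))) := by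
    fun_prop
  rw [integrable_withDensity_iff hw2 (ae_of_all _ fun x => ENNReal.ofReal_lt_top)]
  exact (integrableOn_Icc_iff_integrableOn_Ioo).2 this2

lemma cosJ (c : ℤ) : ∫ θ in (0:ℝ)..π, Real.cos (c * θ) = if c = 0 then π else 0 := by
  split_ifs with hc
  · subst hc; simp [Real.pi_pos.le]
  · have hc' : (c : ℝ) ≠ 0 := Int.cast_ne_zero.2 hc
    rw [intervalIntegral.integral_comp_mul_left (fun x => Real.cos x) hc']
    simp [integral_cos, Real.sin_int_mul_pi]

lemma cos_orth (n k : ℕ) :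
    ∫ θ in Set.Ioo (0:ℝ) π, Real.cos (n * θ) * Real.cos (k * θ)
      = if n = k then (if n = 0 then π else π / 2) else 0 := by
  have h1 : ∫ θ in Set.Ioo (0:ℝ) π, Real.cos (n * θ) * Real.cos (k * θ)
      = ∫ θ in (0:ℝ)..π, Real.cos (n * θ) * Real.cos (k * θ) := by
    rw [intervalIntegral.integral_of_le Real.pi_pos.le, integral_Ioc_eq_integral_Ioo]
  have h2 : ∀ θ : ℝ, Real.cos (n * θ) * Real.cos (k * θ)
      = (Real.cos ((((n : ℤ) + (k : ℤ) : ℤ) : ℝ) * θ) + Real.cos ((((n : ℤ) - (k : ℤ) : ℤ) : ℝ) * θ)) / 2 := by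
    intro θ
    push_cast
    rw [add_mul, sub_mul, Real.cos_add, Real.cos_sub]
    ring
  rw [h1]
  simp_rw [h2]
  rw [intervalIntegral.integral_div, intervalIntegral.integral_add
    (by apply Continuous.intervalIntegrable; fun_prop)
    (by apply Continuous.intervalIntegrable; fun_prop), cosJ, cosJ]
  have hnk : ((n : ℤ) + k = 0) ↔ (n = 0 ∧ k = 0) := by omega
  by_cases h : n = k
  · subst h
    by_cases h0 : n = 0
    · subst h0; norm_num
    · have : ¬ ((n : ℤ) + n = 0) := by omega
      simp [this, h0]
  · have hne : ¬ ((n:ℤ) - k = 0) := by omega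
    have hne2 : ¬ ((n:ℤ) + k = 0) ∨ ((n:ℤ)+k = 0) := em _ |>.symm
    by_cases hz : (n:ℤ) + k = 0
    · have hn0 : n = 0 ∧ k = 0 := hnk.1 hz
      exact absurd (hn0.1.trans hn0.2.symm) h
    · simp [hz, hne, h]

lemma chebTT (n k : ℕ) :
    ∫ x, (T ℝ (n : ℤ)).eval x * (T ℝ (k : ℤ)).eval x ∂chebMeas
      = if n = k then (if n = 0 then 1 else 1 / 2) else 0 := by
  rw [cheb_integral (fun x => (T ℝ (n : ℤ)).eval x * (T ℝ (k : ℤ)).eval x)]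
  simp_rw [Polynomial.Chebyshev.T_real_cos, Int.cast_natCast]
  rw [cos_orth]
  have hπ : (π : ℝ) ≠ 0 := Real.pi_ne_zero
  split_ifs <;> field_simp <;> simp

lemma chebT_int (n : ℕ) : ∫ x, (T ℝ (n : ℤ)).eval x ∂chebMeas = if n = 0 then 1 else 0 := by
  have h := chebTT n 0
  simp only [Nat.cast_zero, Polynomial.Chebyshev.T_zero, Polynomial.eval_one, mul_one] at h
  rw [h]
  by_cases h0 : n = 0 <;> simp [h0]

lemma cheb_one : ∫ x, (1 : ℝ) ∂chebMeas = 1 := by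
  rw [cheb_integral (fun _ => (1:ℝ))]
  rw [setIntegral_const]
  rw [measureReal_def, Real.volume_Ioo]
  rw [sub_zero, ENNReal.toReal_ofReal Real.pi_pos.le]
  simp [Real.pi_ne_zero]

instance chebMeas_prob : IsProbabilityMeasure chebMeas := by
  have hfin : chebMeas Set.univ < ⊤ :=
    (((integrable_const_iff).1 (cheb_integrable (fun _ => 1) continuous_const)).resolve_left
      one_ne_zero).measure_univ_lt_top
  constructor
  have h2 : ∫ x, (1 : ℝ) ∂chebMeas = (chebMeas Set.univ).toReal := by
    rw [integral_const]; simp [measureReal_def]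
  rw [cheb_one] at h2
  exact (ENNReal.toReal_eq_one_iff _).1 h2.symm

lemma integrable_pi_prod {n : ℕ} (μ : Measure ℝ) [SigmaFinite μ] (f : Fin n → ℝ → ℝ)
    (hf : ∀ i, Integrable (f i) μ) :
    Integrable (fun x : Fin n → ℝ => ∏ i, f i (x i)) (Measure.pi fun _ => μ) := by
  induction n with
  | zero =>
      simp only [Finset.univ_eq_empty, Finset.prod_empty, integrable_const_iff, one_ne_zero,
        false_or]
      constructor
      rw [Measure.pi_univ]
      simp
  | succ n n_ih =>
      have h := ((measurePreserving_piFinSuccAbove (fun _ : Fin (n+1) => μ) 0).symm)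
      rw [← h.integrable_comp_emb (MeasurableEquiv.measurableEmbedding _)]
      simp_rw [MeasurableEquiv.piFinSuccAbove_symm_apply, Fin.insertNthEquiv,
        Fin.prod_univ_succ, Fin.insertNth_zero]
      simp only [Fin.zero_succAbove, Function.comp_def, Fin.cons_zero, Fin.cons_succ,
        MeasurableEquiv.coe_mk, Equiv.coe_fn_mk]
      have hrec : Integrable (fun (x : Fin n → ℝ) ↦ ∏ j, f (Fin.succ j) (x j))
          (Measure.pi fun _ => μ) := n_ih (fun _ => f _) (fun i => hf _)
      exact Integrable.mul_prod (hf 0) hrec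

lemma integral_pi_prod {n : ℕ} (μ : Measure ℝ) [SigmaFinite μ] (f : Fin n → ℝ → ℝ) :
    ∫ x : Fin n → ℝ, ∏ i, f i (x i) ∂(Measure.pi fun _ => μ) = ∏ i, ∫ x, f i x ∂μ := by
  induction n with
  | zero => simp [measureReal_def, Measure.pi_univ]
  | succ n n_ih =>
      calc
        _ = ∫ x : ℝ × (Fin n → ℝ),
            f 0 x.1 * ∏ i : Fin n, f (Fin.succ i) (x.2 i)
              ∂(μ.prod (Measure.pi fun _ => μ)) := by
          rw [← ((measurePreserving_piFinSuccAbove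
            (fun _ : Fin (n+1) => μ) 0).symm).integral_comp']
          congr 1
          ext x
          rw [Fin.prod_univ_succ]
          simp [MeasurableEquiv.piFinSuccAbove_symm_apply, Fin.zero_succAbove]
        _ = (∫ x, f 0 x ∂μ) * ∏ i : Fin n, ∫ x, f (Fin.succ i) x ∂μ := by
          rw [← n_ih (fun i => f (Fin.succ i)), ← integral_prod_mul]
        _ = ∏ i, ∫ x, f i x ∂μ := by rw [Fin.prod_univ_succ]

lemma integrable_sum_prod {n : ℕ} {α : Type*} (F : Finset α) (coef : α → ℝ)
    (h : α → Fin n → ℝ → ℝ) (hc : ∀ t i, Continuous (h t i)) :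
    Integrable (fun x : Fin n → ℝ => ∑ t ∈ F, coef t * ∏ i, h t i (x i))
      (Measure.pi fun _ => chebMeas) :=
  integrable_finset_sum F fun t _ =>
    ((integrable_pi_prod chebMeas _ fun i => cheb_integrable _ (hc t i)).const_mul _)

lemma integral_sum_prod {n : ℕ} {α : Type*} (F : Finset α) (coef : α → ℝ)
    (h : α → Fin n → ℝ → ℝ) (hc : ∀ t i, Continuous (h t i)) :
    ∫ x : Fin n → ℝ, (∑ t ∈ F, coef t * ∏ i, h t i (x i)) ∂(Measure.pi fun _ => chebMeas)
      = ∑ t ∈ F, coef t * ∏ i, ∫ y, h t i y ∂chebMeas := by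
  rw [integral_finset_sum F fun t _ =>
    ((integrable_pi_prod chebMeas _ fun i => cheb_integrable _ (hc t i)).const_mul _)]
  refine Finset.sum_congr rfl fun t _ => ?_
  rw [integral_const_mul, integral_pi_prod]

lemma g_int (q m : ℕ) (hq : 2 ≤ q) :
    ∫ y, (T ℝ ((q ^ m : ℕ) : ℤ)).eval y ∂chebMeas = 0 := by
  rw [chebT_int, if_neg (by positivity)]

lemma gg_int (q m k : ℕ) (hq : 2 ≤ q) :
    ∫ y, (T ℝ ((q ^ m : ℕ) : ℤ)).eval y * (T ℝ ((q ^ k : ℕ) : ℤ)).eval y ∂chebMeas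
      = if m = k then 1 / 2 else 0 := by
  rw [chebTT]
  have hinj : q ^ m = q ^ k ↔ m = k :=
    ⟨fun h => Nat.pow_right_injective hq h, fun h => by rw [h]⟩
  have hne : q ^ m ≠ 0 := by positivity
  by_cases h : m = k
  · rw [if_pos (hinj.2 h), if_neg hne, if_pos h]
  · rw [if_neg (fun hh => h (hinj.1 hh)), if_neg h]

lemma T_comp_eval (a b : ℕ) (y : ℝ) :
    (T ℝ (a : ℤ)).eval ((T ℝ (b : ℤ)).eval y) = (T ℝ ((a * b : ℕ) : ℤ)).eval y := by
  rw [show ((a * b : ℕ) : ℤ) = (a : ℤ) * (b : ℤ) by push_cast; ring,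
    Polynomial.Chebyshev.T_mul, Polynomial.eval_comp]

lemma T_iterate (q l : ℕ) (y : ℝ) :
    (fun z => (T ℝ (q : ℤ)).eval z)^[l] y = (T ℝ ((q ^ l : ℕ) : ℤ)).eval y := by
  induction l generalizing y with
  | zero => simp [Polynomial.Chebyshev.T_one]
  | succ l ih =>
      rw [Function.iterate_succ_apply', ih, T_comp_eval,
        show q * q ^ l = q ^ (l + 1) by ring]

/-- mean and two-point correlations for the multi-dimensional
Chebyshev integrand under the product Chebyshev map iterated `l` times. -/
theorem multidim_chebyshev_correlation
    (s : ℕ) (hs : 1 ≤ s) (L : ℕ) (ac : ℝ) (a : ℕ → ℝ)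
    (p : Fin s → ℕ) (hp : ∀ i, 2 ≤ p i)
    (μs : Measure (Fin s → ℝ))
    (hμs : μs = Measure.pi (fun _ : Fin s =>
      (volume.restrict (Set.Icc (-1 : ℝ) 1)).withDensity
        (fun x => ENNReal.ofReal (1 / (Real.pi * Real.sqrt (1 - x ^ 2))))))
    (B : (Fin s → ℝ) → ℝ)
    (hB : ∀ x, B x = ac + ∑ m ∈ range (L + 1),
        a m * ∏ i : Fin s, (T ℝ ((p i) ^ m : ℕ)).eval (x i)) :
    (∫ x, B x ∂μs = ac)
    ∧ (∀ l : ℕ, 1 ≤ l →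
        ∫ x, B x * B (fun i => (fun y => (T ℝ (p i)).eval y)^[l] (x i)) ∂μs
          = ac ^ 2 + (1 / (2 : ℝ) ^ s) * ∑ m ∈ Icc l L, a m * a (m - l)) := by
  have hμs' : μs = Measure.pi (fun _ : Fin s => chebMeas) := hμs
  subst hμs'
  have i0 : Fin s := ⟨0, hs⟩
  set g : ℕ → Fin s → ℝ → ℝ := fun m i y => (T ℝ ((p i ^ m : ℕ) : ℤ)).eval y with hg
  have hgc : ∀ m i, Continuous (g m i) := fun m i => Polynomial.continuous _
  have hg0 : ∀ m i, ∫ y, g m i y ∂chebMeas = 0 := fun m i => g_int (p i) m (hp i)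
  have hprod0 : ∀ m : ℕ, (∏ i : Fin s, ∫ y, g m i y ∂chebMeas) = 0 := fun m =>
    Finset.prod_eq_zero (Finset.mem_univ i0) (hg0 m i0)
  have I2 : Integrable (fun x : Fin s → ℝ => ∑ m ∈ range (L + 1),
      a m * ∏ i : Fin s, g m i (x i)) (Measure.pi fun _ : Fin s => chebMeas) :=
    integrable_sum_prod (range (L + 1)) a (fun m i y => g m i y) (fun t i => hgc _ i)
  have E2 : (∫ x : Fin s → ℝ, (∑ m ∈ range (L + 1),
        a m * ∏ i : Fin s, g m i (x i)) ∂(Measure.pi fun _ : Fin s => chebMeas))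
      = ∑ m ∈ range (L + 1), a m * ∏ i : Fin s, ∫ y, g m i y ∂chebMeas :=
    integral_sum_prod (range (L + 1)) a (fun m i y => g m i y) (fun t i => hgc _ i)
  constructor
  · calc ∫ x, B x ∂(Measure.pi (fun _ : Fin s => chebMeas))
        = ∫ x : Fin s → ℝ, (ac + ∑ m ∈ range (L + 1), a m * ∏ i : Fin s, g m i (x i))
            ∂(Measure.pi (fun _ : Fin s => chebMeas)) :=
          integral_congr_ae (Filter.Eventually.of_forall fun x => hB x)
      _ = ac + ∑ m ∈ range (L + 1), a m * ∏ i : Fin s, ∫ y, g m i y ∂chebMeas := by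
          rw [integral_add (integrable_const ac) I2, integral_const, E2]
          simp
      _ = ac := by simp [hprod0]
  · intro l hl
    have hB2 : ∀ x : Fin s → ℝ,
        B (fun i => (fun y => (T ℝ (p i)).eval y)^[l] (x i))
          = ac + ∑ m ∈ range (L + 1), a m * ∏ i : Fin s, g (m + l) i (x i) := by
      intro x
      rw [hB]
      congr 1
      refine Finset.sum_congr rfl fun m _ => ?_
      congr 1
      refine Finset.prod_congr rfl fun i _ => ?_
      show (T ℝ ((p i ^ m : ℕ) : ℤ)).eval ((fun y => (T ℝ ((p i : ℕ) : ℤ)).eval y)^[l] (x i))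
          = (T ℝ ((p i ^ (m + l) : ℕ) : ℤ)).eval (x i)
      rw [T_iterate (p i) l (x i), T_comp_eval, ← pow_add]
    have I1 : Integrable (fun x : Fin s → ℝ => ∑ m ∈ range (L + 1),
        (ac * a m) * ∏ i : Fin s, g (m + l) i (x i)) (Measure.pi fun _ : Fin s => chebMeas) :=
      integrable_sum_prod (range (L + 1)) (fun m => ac * a m) (fun m i y => g (m + l) i y)
        (fun t i => hgc _ i)
    have I2' : Integrable (fun x : Fin s → ℝ => ∑ m ∈ range (L + 1),
        (ac * a m) * ∏ i : Fin s, g m i (x i)) (Measure.pi fun _ : Fin s => chebMeas) :=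
      integrable_sum_prod (range (L + 1)) (fun m => ac * a m) (fun m i y => g m i y)
        (fun t i => hgc _ i)
    have I3 : Integrable (fun x : Fin s → ℝ => ∑ q ∈ range (L + 1) ×ˢ range (L + 1),
        (a q.1 * a q.2) * ∏ i : Fin s, (g q.1 i (x i) * g (q.2 + l) i (x i)))
        (Measure.pi fun _ : Fin s => chebMeas) :=
      integrable_sum_prod (range (L + 1) ×ˢ range (L + 1)) (fun q => a q.1 * a q.2)
        (fun q i y => g q.1 i y * g (q.2 + l) i y) (fun t i => (hgc _ i).mul (hgc _ i))
    have E1 : (∫ x : Fin s → ℝ, (∑ m ∈ range (L + 1),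
          (ac * a m) * ∏ i : Fin s, g (m + l) i (x i)) ∂(Measure.pi fun _ : Fin s => chebMeas))
        = ∑ m ∈ range (L + 1), (ac * a m) * ∏ i : Fin s, ∫ y, g (m + l) i y ∂chebMeas :=
      integral_sum_prod (range (L + 1)) (fun m => ac * a m) (fun m i y => g (m + l) i y)
        (fun t i => hgc _ i)
    have E2' : (∫ x : Fin s → ℝ, (∑ m ∈ range (L + 1),
          (ac * a m) * ∏ i : Fin s, g m i (x i)) ∂(Measure.pi fun _ : Fin s => chebMeas))
        = ∑ m ∈ range (L + 1), (ac * a m) * ∏ i : Fin s, ∫ y, g m i y ∂chebMeas :=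
      integral_sum_prod (range (L + 1)) (fun m => ac * a m) (fun m i y => g m i y)
        (fun t i => hgc _ i)
    have E3 : (∫ x : Fin s → ℝ, (∑ q ∈ range (L + 1) ×ˢ range (L + 1),
          (a q.1 * a q.2) * ∏ i : Fin s, (g q.1 i (x i) * g (q.2 + l) i (x i)))
          ∂(Measure.pi fun _ : Fin s => chebMeas))
        = ∑ q ∈ range (L + 1) ×ˢ range (L + 1),
            (a q.1 * a q.2) * ∏ i : Fin s, ∫ y, g q.1 i y * g (q.2 + l) i y ∂chebMeas :=
      integral_sum_prod (range (L + 1) ×ˢ range (L + 1)) (fun q => a q.1 * a q.2)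
        (fun q i y => g q.1 i y * g (q.2 + l) i y) (fun t i => (hgc _ i).mul (hgc _ i))
    have hexp : ∀ x : Fin s → ℝ,
        B x * B (fun i => (fun y => (T ℝ (p i)).eval y)^[l] (x i))
          = ac ^ 2 + ((∑ m ∈ range (L + 1), (ac * a m) * ∏ i : Fin s, g (m + l) i (x i))
            + ((∑ m ∈ range (L + 1), (ac * a m) * ∏ i : Fin s, g m i (x i))
              + ∑ q ∈ range (L + 1) ×ˢ range (L + 1),
                  (a q.1 * a q.2) * ∏ i : Fin s, (g q.1 i (x i) * g (q.2 + l) i (x i)))) := by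
      intro x
      rw [hB, hB2]
      have e1 : ∀ (S₁ S₂ : ℝ), (ac + S₁) * (ac + S₂)
          = ac ^ 2 + (ac * S₂ + (ac * S₁ + S₁ * S₂)) := by intros; ring
      rw [e1]
      congr 1
      congr 1
      · rw [Finset.mul_sum]
        exact Finset.sum_congr rfl fun m _ => by ring
      congr 1
      · rw [Finset.mul_sum]
        exact Finset.sum_congr rfl fun m _ => by ring
      · rw [Finset.sum_mul_sum, ← Finset.sum_product']
        refine Finset.sum_congr rfl fun q _ => ?_
        rw [Finset.prod_mul_distrib]
        ring
    calc ∫ x, B x * B (fun i => (fun y => (T ℝ (p i)).eval y)^[l] (x i))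
            ∂(Measure.pi (fun _ : Fin s => chebMeas))
        = ∫ x : Fin s → ℝ,
            (ac ^ 2 + ((∑ m ∈ range (L + 1), (ac * a m) * ∏ i : Fin s, g (m + l) i (x i))
            + ((∑ m ∈ range (L + 1), (ac * a m) * ∏ i : Fin s, g m i (x i))
              + ∑ q ∈ range (L + 1) ×ˢ range (L + 1),
                  (a q.1 * a q.2) * ∏ i : Fin s, (g q.1 i (x i) * g (q.2 + l) i (x i)))))
            ∂(Measure.pi (fun _ : Fin s => chebMeas)) :=
          integral_congr_ae (Filter.Eventually.of_forall fun x => hexp x)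
      _ = ac ^ 2 + ((∑ m ∈ range (L + 1), (ac * a m) * ∏ i : Fin s, ∫ y, g (m + l) i y ∂chebMeas)
            + ((∑ m ∈ range (L + 1), (ac * a m) * ∏ i : Fin s, ∫ y, g m i y ∂chebMeas)
              + ∑ q ∈ range (L + 1) ×ˢ range (L + 1),
                  (a q.1 * a q.2) * ∏ i : Fin s, ∫ y, g q.1 i y * g (q.2 + l) i y ∂chebMeas)) := by
          have I23 : Integrable (fun x : Fin s → ℝ =>
              (∑ m ∈ range (L + 1), (ac * a m) * ∏ i : Fin s, g m i (x i))
              + ∑ q ∈ range (L + 1) ×ˢ range (L + 1),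
                  (a q.1 * a q.2) * ∏ i : Fin s, (g q.1 i (x i) * g (q.2 + l) i (x i)))
              (Measure.pi fun _ : Fin s => chebMeas) := I2'.add I3
          have I123 : Integrable (fun x : Fin s → ℝ =>
              (∑ m ∈ range (L + 1), (ac * a m) * ∏ i : Fin s, g (m + l) i (x i))
              + ((∑ m ∈ range (L + 1), (ac * a m) * ∏ i : Fin s, g m i (x i))
              + ∑ q ∈ range (L + 1) ×ˢ range (L + 1),
                  (a q.1 * a q.2) * ∏ i : Fin s, (g q.1 i (x i) * g (q.2 + l) i (x i))))
              (Measure.pi fun _ : Fin s => chebMeas) := I1.add I23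
          rw [integral_add (integrable_const _) I123,
            integral_add I1 I23, integral_add I2' I3,
            integral_const, E1, E2', E3]
          simp
      _ = ac ^ 2 + ∑ q ∈ range (L + 1) ×ˢ range (L + 1),
            (a q.1 * a q.2) * ∏ i : Fin s, ∫ y, g q.1 i y * g (q.2 + l) i y ∂chebMeas := by
          simp [hprod0]
      _ = ac ^ 2 + (1 / (2 : ℝ) ^ s) * ∑ m ∈ Icc l L, a m * a (m - l) := by
          have hfac : ∀ q : ℕ × ℕ, (∏ i : Fin s, ∫ y, g q.1 i y * g (q.2 + l) i y ∂chebMeas)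
              = if q.1 = q.2 + l then (1 / (2 : ℝ)) ^ s else 0 := by
            intro q
            have hv : ∀ i : Fin s, ∫ y, g q.1 i y * g (q.2 + l) i y ∂chebMeas
                = if q.1 = q.2 + l then (1 / 2 : ℝ) else 0 := fun i =>
              gg_int (p i) q.1 (q.2 + l) (hp i)
            simp_rw [hv]
            by_cases h : q.1 = q.2 + l
            · simp [h]
            · simp [h, zero_pow (by omega : s ≠ 0)]
          simp_rw [hfac]
          rw [Finset.sum_product]
          have hinner : ∀ m ∈ range (L + 1),
              (∑ m' ∈ range (L + 1), (a m * a m') * if m = m' + l then (1/(2:ℝ))^s else 0)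
                = if l ≤ m then (a m * a (m - l)) * (1/(2:ℝ))^s else 0 := by
            intro m hm
            by_cases hlm : l ≤ m
            · rw [if_pos hlm]
              rw [Finset.sum_eq_single_of_mem (m - l)
                  (by simp at hm ⊢; omega)
                  (fun b _ hb => by rw [if_neg (by omega), mul_zero])]
              rw [if_pos (by omega)]
            · rw [if_neg hlm]
              exact Finset.sum_eq_zero fun b _ => by rw [if_neg (by omega), mul_zero]
          rw [Finset.sum_congr rfl hinner, ← Finset.sum_filter]
          have hset : Finset.filter (fun m => l ≤ m) (range (L + 1)) = Finset.Icc l L := by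
            ext m
            simp only [Finset.mem_filter, Finset.mem_range, Finset.mem_Icc, Nat.lt_succ_iff]
            omega
          rw [hset, ← Finset.sum_mul]
          rw [one_div, inv_pow, ← one_div]
          ring
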